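/- Let T(u) be Hermitian PSD Toeplitz with Vandermonde decomposition T(u) = Σ_{k=1}^r p_k a(f_k)a(f_k)^H (p_k > 0, distinct f_k), and suppose the columns of Y ∈ ℂ^{N×L} lie in the range of T(u), so Y = Σ_k a(f_k)s_k for unique rows s_k. Then tr(Y^H T(u)⁻¹ Y) = Σ_{k=1}^r ‖s_k‖₂²/p_k, where T(u)⁻¹ is interpreted as the pseudoinverse when T(u) is rank-deficient. -/

import Mathlib

open Matrix ComplexOrder

/-- The Hermitian Toeplitz matrix whose first row is the transpose of `u`. -/
def Toep (N : ℕ) (u : Fin N → ℂ) : Matrix (Fin N) (Fin N) ℂ :=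
  Matrix.of fun j k =>
    if (j : ℕ) ≤ (k : ℕ) then
      u ⟨(k : ℕ) - (j : ℕ), lt_of_le_of_lt (Nat.sub_le _ _) k.isLt⟩
    else
      (starRingEnd ℂ) (u ⟨(j : ℕ) - (k : ℕ), lt_of_le_of_lt (Nat.sub_le _ _) j.isLt⟩)

/-- The complex sinusoid atom `a(f) = (1, e^{i2πf}, …, e^{i2π(N−1)f})ᵀ`. -/
noncomputable def atom (N : ℕ) (f : ℝ) : Fin N → ℂ :=
  fun n => Complex.exp (Complex.I * (2 * (Real.pi : ℂ) * (f : ℂ) * ((n : ℕ) : ℂ)))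

/-- Euclidean (ℓ2) norm of a row coefficient vector. -/
noncomputable def l2 {L : ℕ} (s : Fin L → ℂ) : ℝ := Real.sqrt (∑ j, ‖s j‖ ^ 2)

/-- `tr(Yᴴ T† Y)` for PSD `T`, with `†` the restriction-to-range (pseudo)inverse,
realized as the supremum of the regularized quadratic forms. -/
noncomputable def qtrace (N L : ℕ) (T : Matrix (Fin N) (Fin N) ℂ)
    (Y : Matrix (Fin N) (Fin L) ℂ) : ℝ :=
  sSup { t : ℝ | ∃ δ : ℝ, 0 < δ ∧
    t = (Yᴴ * (T + δ • (1 : Matrix (Fin N) (Fin N) ℂ))⁻¹ * Y).trace.re }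

lemma atom_pow (N : ℕ) (f : ℝ) (n : Fin N) :
    atom N f n = Complex.exp (Complex.I * (2 * Real.pi * f)) ^ (n : ℕ) := by
  rw [atom, ← Complex.exp_nat_mul]
  congr 1
  ring

lemma z_injective {r : ℕ} (f : Fin r → ℝ) (hrange : ∀ k, f k ∈ Set.Ico (0:ℝ) 1)
    (hinj : Function.Injective f) :
    Function.Injective (fun k => Complex.exp (Complex.I * (2 * Real.pi * (f k : ℂ)))) := by
  intro a b hab
  simp only [Complex.exp_eq_exp_iff_exists_int] at hab
  obtain ⟨n, hn⟩ := hab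
  apply hinj
  have him := congrArg Complex.im hn
  simp [Complex.add_im, Complex.mul_im, Complex.mul_re] at him
  have h1 := (hrange a).1; have h2 := (hrange a).2
  have h3 := (hrange b).1; have h4 := (hrange b).2
  have hfa : f a - f b = n := by
    have hpi := Real.pi_pos
    nlinarith [him]
  have h5' : (-1:ℤ) < n := by exact_mod_cast show (-1:ℝ) < n by rw [← hfa]; linarith
  have h6' : n < 1 := by exact_mod_cast show (n:ℝ) < 1 by rw [← hfa]; linarith
  have hn0 : n = 0 := by omega
  rw [hn0] at hfa; push_cast at hfa; linarith

lemma vand_mulVec_inj {N r : ℕ} (hr : r ≤ N) (z : Fin r → ℂ) (hz : Function.Injective z)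
    (x : Fin r → ℂ)
    (hx : (Matrix.of fun (n : Fin N) (k : Fin r) => z k ^ (n:ℕ)) *ᵥ x = 0) : x = 0 := by
  set V : Matrix (Fin r) (Fin r) ℂ := (Matrix.vandermonde z)ᵀ with hV
  have hdet : V.det ≠ 0 := by
    rw [Matrix.det_transpose, Ne, Matrix.det_vandermonde_eq_zero_iff]
    rintro ⟨i, j, hij, hne⟩
    exact hne (hz hij)
  have hVx : V *ᵥ x = 0 := by
    funext n
    have := congrFun hx (Fin.castLE hr n)
    simpa [hV, Matrix.mulVec, dotProduct, Matrix.vandermonde] using this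
  have hinj : Function.Injective (V.mulVec) :=
    Matrix.mulVec_injective_iff_isUnit.mpr ((Matrix.isUnit_iff_isUnit_det V).mpr hdet.isUnit)
  have := hinj (by rw [hVx, Matrix.mulVec_zero] : V *ᵥ x = V *ᵥ 0)
  exact this

lemma key_identity {N L r : ℕ} (T : Matrix (Fin N) (Fin N) ℂ) (A : Matrix (Fin N) (Fin r) ℂ)
    (P Pinv : Matrix (Fin r) (Fin r) ℂ) (S : Matrix (Fin r) (Fin L) ℂ)
    (hT : T = A * P * Aᴴ) (hPP : P * Pinv = 1) (hPh : Pinvᴴ = Pinv) (δ : ℝ)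
    (hD : IsUnit (T + δ • (1 : Matrix (Fin N) (Fin N) ℂ)).det)
    (hB : IsUnit (Aᴴ * A + δ • Pinv).det) :
    ((A * S)ᴴ * (T + δ • (1 : Matrix (Fin N) (Fin N) ℂ))⁻¹ * (A * S))
      = Sᴴ * (Pinv * S) -
        δ • ((Pinv * S)ᴴ * (Aᴴ * A + δ • Pinv)⁻¹ * (Pinv * S)) := by
  set D : Matrix (Fin N) (Fin N) ℂ := T + δ • 1 with hDdef
  set B : Matrix (Fin r) (Fin r) ℂ := Aᴴ * A + δ • Pinv with hBdef
  have hBB : B * B⁻¹ = 1 := Matrix.mul_nonsing_inv _ hB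
  have hDA : D * A = A * (P * B) := by
    rw [hDdef, hBdef, hT, Matrix.add_mul, Matrix.smul_mul, Matrix.one_mul]
    simp only [Matrix.mul_add, Matrix.mul_smul, hPP, Matrix.mul_one, Matrix.mul_assoc]
  have h1 : D * (A * (B⁻¹ * Pinv)) = A := by
    calc D * (A * (B⁻¹ * Pinv)) = (D * A) * (B⁻¹ * Pinv) := by rw [Matrix.mul_assoc]
      _ = A * (P * B) * (B⁻¹ * Pinv) := by rw [hDA]
      _ = A * (P * ((B * B⁻¹) * Pinv)) := by simp only [Matrix.mul_assoc]
      _ = A := by rw [hBB, Matrix.one_mul, hPP, Matrix.mul_one]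
  have hDinvA : D⁻¹ * A = A * (B⁻¹ * Pinv) := by
    conv_lhs => rw [← h1]
    rw [← Matrix.mul_assoc, Matrix.nonsing_inv_mul _ hD, Matrix.one_mul]
  have hAhA : Aᴴ * A = B - δ • Pinv := by rw [hBdef, add_sub_cancel_right]
  calc (A * S)ᴴ * D⁻¹ * (A * S)
      = Sᴴ * ((Aᴴ * (D⁻¹ * A)) * S) := by
        rw [Matrix.conjTranspose_mul]; simp only [Matrix.mul_assoc]
    _ = Sᴴ * ((Aᴴ * (A * (B⁻¹ * Pinv))) * S) := by rw [hDinvA]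
    _ = Sᴴ * (((Aᴴ * A) * B⁻¹) * (Pinv * S)) := by simp only [Matrix.mul_assoc]
    _ = Sᴴ * (((B - δ • Pinv) * B⁻¹) * (Pinv * S)) := by rw [hAhA]
    _ = Sᴴ * (Pinv * S) - δ • ((Pinv * S)ᴴ * B⁻¹ * (Pinv * S)) := by
        rw [Matrix.sub_mul, hBB]
        simp only [Matrix.sub_mul, Matrix.mul_sub, Matrix.smul_mul, Matrix.mul_smul,
          Matrix.one_mul, Matrix.conjTranspose_mul, hPh]
        congr 1
        simp only [Matrix.mul_assoc]

lemma posdef_AhA {N r : ℕ} (A : Matrix (Fin N) (Fin r) ℂ)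
    (hA : ∀ x, A *ᵥ x = 0 → x = 0) : (Aᴴ * A).PosDef := by
  refine Matrix.PosDef.of_dotProduct_mulVec_pos (Matrix.isHermitian_conjTranspose_mul_self A) fun x hx => ?_
  rw [← Matrix.mulVec_mulVec, Matrix.dotProduct_mulVec, Matrix.vecMul_conjTranspose, star_star]
  rw [Matrix.dotProduct_star_self_pos_iff]
  intro h
  exact hx (hA x h)

lemma trace_quad_nonneg {n L : ℕ} (M : Matrix (Fin n) (Fin n) ℂ) (hM : M.PosSemidef)
    (W : Matrix (Fin n) (Fin L) ℂ) : 0 ≤ (Wᴴ * M * W).trace.re := by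
  have hdiag : ∀ j, (Wᴴ * M * W) j j = star (fun i => W i j) ⬝ᵥ M *ᵥ (fun i => W i j) := by
    intro j
    simp only [Matrix.mul_apply, Matrix.conjTranspose_apply, dotProduct, Matrix.mulVec,
      Pi.star_apply, Finset.sum_mul, Finset.mul_sum]
    rw [Finset.sum_comm]
    congr 1; ext i; congr 1; ext a; ring
  rw [Matrix.trace]
  rw [Complex.re_sum]
  refine Finset.sum_nonneg fun j _ => ?_
  have := hM.dotProduct_mulVec_nonneg (fun i => W i j)
  rw [← hdiag j] at this
  exact (Complex.le_def.mp this).1.trans_eq rfl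

lemma psi_cont {r L : ℕ} (M Pinv : Matrix (Fin r) (Fin r) ℂ) (hM : IsUnit M.det)
    (W : Matrix (Fin r) (Fin L) ℂ) :
    ContinuousAt (fun δ : ℝ => δ * ((Wᴴ * (M + δ • Pinv)⁻¹ * W).trace.re)) 0 := by
  have hB : Continuous (fun δ : ℝ => M + δ • Pinv) :=
    continuous_const.add (continuous_id.smul continuous_const)
  have hB0 : M + (0:ℝ) • Pinv = M := by simp
  have hinvM : ContinuousAt Inv.inv (M + (0:ℝ) • Pinv) := by
    rw [hB0]
    exact continuousAt_matrix_inv M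
      (hM.unit_spec ▸ NormedRing.inverse_continuousAt hM.unit)
  have hinv : ContinuousAt (fun δ : ℝ => (M + δ • Pinv)⁻¹) 0 :=
    ContinuousAt.comp (g := Inv.inv) (f := fun δ : ℝ => M + δ • Pinv) hinvM hB.continuousAt
  have houter : Continuous (fun X : Matrix (Fin r) (Fin r) ℂ => ((Wᴴ * X * W).trace.re)) :=
    Complex.continuous_re.comp
      (((continuous_const.matrix_mul continuous_id).matrix_mul continuous_const).matrix_trace)
  exact continuousAt_id.mul ((houter.continuousAt).comp hinv)

lemma trace_S_PinvS {r L : ℕ} (p : Fin r → ℝ) (hp : ∀ k, 0 < p k) (s : Fin r → Fin L → ℂ) :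
    ((Matrix.of fun k j => s k j)ᴴ *
      ((Matrix.diagonal fun k => (((p k)⁻¹ : ℝ) : ℂ)) * (Matrix.of fun k j => s k j))).trace.re
      = ∑ k, (∑ j, ‖s k j‖ ^ 2) / p k := by
  have hentry : ∀ j, ((Matrix.of fun k j => s k j)ᴴ *
      ((Matrix.diagonal fun k => (((p k)⁻¹ : ℝ) : ℂ)) * (Matrix.of fun k j => s k j))) j j
      = (((∑ k, (p k)⁻¹ * ‖s k j‖ ^ 2 : ℝ)) : ℂ) := by
    intro j
    rw [Matrix.mul_apply]
    push_cast
    refine Finset.sum_congr rfl fun k _ => ?_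
    simp only [Matrix.diagonal_mul, Matrix.conjTranspose_apply, Matrix.of_apply]
    rw [show star (s k j) = (starRingEnd ℂ) (s k j) from rfl]
    rw [show (starRingEnd ℂ) (s k j) * (((p k : ℝ):ℂ)⁻¹ * s k j)
        = ((p k : ℝ):ℂ)⁻¹ * (s k j * (starRingEnd ℂ) (s k j)) from by ring]
    rw [Complex.mul_conj, Complex.normSq_eq_norm_sq]
    push_cast
    ring
  rw [Matrix.trace]
  simp only [Matrix.diag, hentry]
  rw [← Complex.ofReal_sum]
  rw [Complex.ofReal_re]
  rw [Finset.sum_comm]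
  refine Finset.sum_congr rfl fun k _ => ?_
  rw [div_eq_mul_inv, Finset.sum_mul]
  exact Finset.sum_congr rfl fun j _ => mul_comm _ _



theorem trace_quadform_vandermonde (N L r : ℕ) (hr : r ≤ N) (u : Fin N → ℂ)
    (hpsd : (Toep N u).PosSemidef)
    (f : Fin r → ℝ) (hrange : ∀ k, f k ∈ Set.Ico (0:ℝ) 1)
    (hinj : Function.Injective f) (p : Fin r → ℝ) (hp : ∀ k, 0 < p k)
    (hdec : Toep N u = ∑ k, ((p k : ℝ) : ℂ) •
      vecMulVec (atom N (f k)) (star (atom N (f k))))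
    (Y : Matrix (Fin N) (Fin L) ℂ) (s : Fin r → (Fin L → ℂ))
    (hY : Y = ∑ k, vecMulVec (atom N (f k)) (s k)) :
    qtrace N L (Toep N u) Y = ∑ k, (l2 (s k)) ^ 2 / p k := by
  classical
  set zf : Fin r → ℂ := fun k => Complex.exp (Complex.I * (2 * Real.pi * (f k : ℂ))) with hzf
  set A : Matrix (Fin N) (Fin r) ℂ := Matrix.of fun n k => zf k ^ (n : ℕ) with hA
  set P : Matrix (Fin r) (Fin r) ℂ := Matrix.diagonal fun k => ((p k : ℝ) : ℂ) with hP
  set Pinv : Matrix (Fin r) (Fin r) ℂ :=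
    Matrix.diagonal fun k => (((p k)⁻¹ : ℝ) : ℂ) with hPv
  set S : Matrix (Fin r) (Fin L) ℂ := Matrix.of fun k j => s k j with hS
  have hatom : ∀ k (n : Fin N), atom N (f k) n = zf k ^ (n : ℕ) := fun k n => atom_pow N (f k) n
  have hTdec : Toep N u = A * P * Aᴴ := by
    rw [hdec]
    ext i j
    rw [Matrix.sum_apply, Matrix.mul_apply]
    refine Finset.sum_congr rfl fun k _ => ?_
    simp only [Matrix.smul_apply, Matrix.vecMulVec_apply, Pi.star_apply, Matrix.mul_diagonal,
      Matrix.conjTranspose_apply, Matrix.of_apply, hatom, smul_eq_mul, hA, hP]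
    ring
  have hYAS : Y = A * S := by
    rw [hY]
    ext i j
    rw [Matrix.sum_apply, Matrix.mul_apply]
    refine Finset.sum_congr rfl fun k _ => ?_
    simp only [Matrix.vecMulVec_apply, Matrix.of_apply, hatom, hA, hS]
  have hAinj : ∀ x, A *ᵥ x = 0 → x = 0 :=
    fun x hx => vand_mulVec_inj hr zf (z_injective f hrange hinj) x hx
  have hAtA : (Aᴴ * A).PosDef := posdef_AhA A hAinj
  have hdetAtA : IsUnit (Aᴴ * A).det := hAtA.det_pos.ne'.isUnit
  have hPPinv : P * Pinv = 1 := by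
    rw [hP, hPv, Matrix.diagonal_mul_diagonal]
    ext i j
    rcases eq_or_ne i j with h | h
    · subst h
      have hne0 : ((p i : ℝ) : ℂ) ≠ 0 := Complex.ofReal_ne_zero.mpr (hp i).ne'
      simp [Matrix.diagonal_apply_eq, Matrix.one_apply_eq, mul_inv_cancel₀ hne0]
    · simp [Matrix.diagonal_apply_ne _ h, Matrix.one_apply_ne h]
  have hPinvH : Pinvᴴ = Pinv := by
    rw [hPv, Matrix.diagonal_conjTranspose]
    refine congrArg Matrix.diagonal (funext fun k => ?_)
    simp [Complex.conj_ofReal]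
  have hsmul1 : ∀ δ : ℝ, δ • (1 : Matrix (Fin N) (Fin N) ℂ) =
      Matrix.diagonal fun _ => (δ : ℂ) := by
    intro δ
    ext i j
    rcases eq_or_ne i j with h | h
    · subst h; simp [Matrix.one_apply_eq, Matrix.diagonal_apply_eq, Complex.real_smul]
    · simp [Matrix.one_apply_ne h, Matrix.diagonal_apply_ne _ h]
  have hsmulP : ∀ δ : ℝ, δ • Pinv = Matrix.diagonal fun k => ((δ * (p k)⁻¹ : ℝ) : ℂ) := by
    intro δ
    rw [hPv]
    ext i j
    rcases eq_or_ne i j with h | h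
    · subst h; simp [Matrix.diagonal_apply_eq, Complex.real_smul]
    · simp [Matrix.diagonal_apply_ne _ h]
  have hDpos : ∀ δ : ℝ, 0 < δ → (Toep N u + δ • (1 : Matrix (Fin N) (Fin N) ℂ)).PosDef := by
    intro δ hδ
    rw [hsmul1 δ]
    exact Matrix.PosDef.posSemidef_add hpsd
      (Matrix.PosDef.diagonal fun i => Complex.zero_lt_real.mpr hδ)
  have hBpos : ∀ δ : ℝ, 0 ≤ δ → (Aᴴ * A + δ • Pinv).PosDef := by
    intro δ hδ
    rw [hsmulP δ]
    refine hAtA.add_posSemidef (Matrix.PosSemidef.diagonal ?_)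
    intro k
    exact Complex.zero_le_real.mpr (mul_nonneg hδ (inv_nonneg.mpr (hp k).le))
  set C : ℝ := ∑ k, (∑ j, ‖s k j‖ ^ 2) / p k with hCdef
  set W : Matrix (Fin r) (Fin L) ℂ := Pinv * S with hW
  set ψ : ℝ → ℝ := fun δ => δ * ((Wᴴ * (Aᴴ * A + δ • Pinv)⁻¹ * W).trace.re) with hψ
  have hkey : ∀ δ : ℝ, 0 < δ →
      (Yᴴ * (Toep N u + δ • (1 : Matrix (Fin N) (Fin N) ℂ))⁻¹ * Y).trace.re = C - ψ δ := by
    intro δ hδ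
    have hD := (Matrix.isUnit_iff_isUnit_det _).mp (hDpos δ hδ).isUnit
    have hB := (Matrix.isUnit_iff_isUnit_det _).mp (hBpos δ hδ.le).isUnit
    rw [hYAS, key_identity (Toep N u) A P Pinv S hTdec hPPinv hPinvH δ hD hB,
      Matrix.trace_sub, Matrix.trace_smul, Complex.sub_re]
    congr 1
    · exact trace_S_PinvS p hp s
    · rw [← hW, hψ]
      rw [Complex.real_smul, Complex.re_ofReal_mul]
  have hψnonneg : ∀ δ : ℝ, 0 < δ → 0 ≤ ψ δ := by
    intro δ hδ
    exact mul_nonneg hδ.le (trace_quad_nonneg _ ((hBpos δ hδ.le).inv).posSemidef W)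
  have hψcont : ContinuousAt ψ 0 := psi_cont (Aᴴ * A) Pinv hdetAtA W
  have hψ0 : ψ 0 = 0 := by simp [hψ]
  have hC : ∑ k, (l2 (s k)) ^ 2 / p k = C := by
    refine Finset.sum_congr rfl fun k _ => ?_
    rw [l2, Real.sq_sqrt (Finset.sum_nonneg fun j _ => sq_nonneg _)]
  rw [hC]
  have hub : ∀ t ∈ { t : ℝ | ∃ δ : ℝ, 0 < δ ∧
      t = (Yᴴ * (Toep N u + δ • (1 : Matrix (Fin N) (Fin N) ℂ))⁻¹ * Y).trace.re }, t ≤ C := by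
    rintro t ⟨δ, hδ, rfl⟩
    rw [hkey δ hδ]
    linarith [hψnonneg δ hδ]
  have hbdd : BddAbove { t : ℝ | ∃ δ : ℝ, 0 < δ ∧
      t = (Yᴴ * (Toep N u + δ • (1 : Matrix (Fin N) (Fin N) ℂ))⁻¹ * Y).trace.re } := ⟨C, hub⟩
  have hne : ∃ t, t ∈ { t : ℝ | ∃ δ : ℝ, 0 < δ ∧
      t = (Yᴴ * (Toep N u + δ • (1 : Matrix (Fin N) (Fin N) ℂ))⁻¹ * Y).trace.re } :=
    ⟨_, ⟨1, one_pos, rfl⟩⟩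
  unfold qtrace
  refine le_antisymm (csSup_le hne hub) ?_
  refine le_of_forall_pos_le_add fun ε hε => ?_
  obtain ⟨η, hη, hsmall⟩ := Metric.continuousAt_iff.mp hψcont ε hε
  set δ := η / 2 with hδdef
  have hδpos : 0 < δ := by positivity
  have hdist : dist δ (0:ℝ) < η := by
    rw [Real.dist_eq, sub_zero, abs_of_pos hδpos]
    linarith
  have hψδ : ψ δ < ε := by
    have := hsmall hdist
    rw [hψ0, Real.dist_eq, sub_zero] at this
    exact (le_abs_self _).trans_lt this
  have hmem : C - ψ δ ∈ { t : ℝ | ∃ δ : ℝ, 0 < δ ∧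
      t = (Yᴴ * (Toep N u + δ • (1 : Matrix (Fin N) (Fin N) ℂ))⁻¹ * Y).trace.re } :=
    ⟨δ, hδpos, (hkey δ hδpos).symm⟩
  have := le_csSup hbdd hmem
  linarith
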